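/- Define F : (0, ∞) → ℝ by F(s) = ∫_0^{π} cos(t) / √(2 (1 − cos t) + s) dt. Then there exists a constant C > 0 such that |F(s) − log(1/√s)| ≤ C for all s ∈ (0, 1]. -/

import Mathlib

open Real

/-- The kernel function `F(s) = ∫_0^π cos t / √(2(1−cos t)+s) dt`. -/
noncomputable def ringKernelF (s : ℝ) : ℝ :=
  ∫ t in (0:ℝ)..π, Real.cos t / Real.sqrt (2 * (1 - Real.cos t) + s)

lemma aux_sin_lower {x : ℝ} (hx : 0 ≤ x) : x - x ^ 3 / 6 ≤ Real.sin x := by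
  have hder : ∀ y : ℝ, HasDerivAt (fun t => Real.sin t - (t - t ^ 3 / 6))
      (Real.cos y - (1 - y ^ 2 / 2)) y := by
    intro y
    have h := (Real.hasDerivAt_sin y).sub
      ((hasDerivAt_id y).sub ((hasDerivAt_pow 3 y).div_const 6))
    refine h.congr_deriv (Eq.symm ?_)
    push_cast
    ring
  have mono : MonotoneOn (fun t => Real.sin t - (t - t ^ 3 / 6)) (Set.Ici 0) := by
    apply monotoneOn_of_deriv_nonneg (convex_Ici 0)
    · exact (Real.continuous_sin.sub (by continuity)).continuousOn
    · intro y _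
      exact (hder y).differentiableAt.differentiableWithinAt
    · intro y _
      rw [(hder y).deriv]
      nlinarith [Real.one_sub_sq_div_two_le_cos (x := y)]
  have h := mono Set.self_mem_Ici (Set.mem_Ici.2 hx) hx
  simpa using h

lemma aux_cos_upper {x : ℝ} (hx : 0 ≤ x) : Real.cos x ≤ 1 - x ^ 2 / 2 + x ^ 4 / 24 := by
  have hder : ∀ y : ℝ, HasDerivAt (fun t => 1 - t ^ 2 / 2 + t ^ 4 / 24 - Real.cos t)
      (Real.sin y - (y - y ^ 3 / 6)) y := by
    intro y
    have h := (((hasDerivAt_const y (1:ℝ)).sub ((hasDerivAt_pow 2 y).div_const 2)).add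
      ((hasDerivAt_pow 4 y).div_const 24)).sub (Real.hasDerivAt_cos y)
    refine h.congr_deriv (Eq.symm ?_)
    push_cast
    ring
  have mono : MonotoneOn (fun t => 1 - t ^ 2 / 2 + t ^ 4 / 24 - Real.cos t) (Set.Ici 0) := by
    apply monotoneOn_of_deriv_nonneg (convex_Ici 0)
    · exact ((by continuity : Continuous fun t : ℝ => 1 - t ^ 2 / 2 + t ^ 4 / 24).sub
        Real.continuous_cos).continuousOn
    · intro y _
      exact (hder y).differentiableAt.differentiableWithinAt
    · intro y hy
      rw [(hder y).deriv]
      have hy0 : (0:ℝ) ≤ y := le_of_lt (by simpa using hy)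
      nlinarith [aux_sin_lower hy0]
  have h := mono Set.self_mem_Ici (Set.mem_Ici.2 hx) hx
  simp at h
  nlinarith [h]


set_option maxHeartbeats 2000000 in
/-- Leading-order logarithmic asymptotics of `F`:
`F(s) = log(1/√s) + O(1)` on `(0, 1]`. -/
theorem ringKernelF_log_asymptotics :
    ∃ C > (0:ℝ), ∀ s ∈ Set.Ioc (0:ℝ) 1,
      |ringKernelF s - Real.log (1 / Real.sqrt s)| ≤ C := by
  refine ⟨100, by norm_num, fun s hs => ?_⟩
  obtain ⟨hs0, hs1⟩ := hs
  -- setup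
  have hDpos : ∀ t : ℝ, 0 < 2 * (1 - Real.cos t) + s := by
    intro t; nlinarith [Real.cos_le_one t]
  have hsqD : ∀ t : ℝ, 0 < Real.sqrt (2 * (1 - Real.cos t) + s) :=
    fun t => Real.sqrt_pos.2 (hDpos t)
  have hApos : ∀ t : ℝ, 0 < t ^ 2 + s := by intro t; positivity
  have hsqA : ∀ t : ℝ, 0 < Real.sqrt (t ^ 2 + s) :=
    fun t => Real.sqrt_pos.2 (hApos t)
  -- continuity / integrability
  have hcD : Continuous fun t : ℝ => Real.sqrt (2 * (1 - Real.cos t) + s) := by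
    continuity
  have hcA : Continuous fun t : ℝ => Real.sqrt (t ^ 2 + s) := by continuity
  have hc1 : Continuous fun t : ℝ => (Real.cos t - 1) / Real.sqrt (2 * (1 - Real.cos t) + s) :=
    (Real.continuous_cos.sub continuous_const).div hcD fun t => (hsqD t).ne'
  have hc2 : Continuous fun t : ℝ => 1 / Real.sqrt (2 * (1 - Real.cos t) + s) :=
    continuous_const.div hcD fun t => (hsqD t).ne'
  have hcg : Continuous fun t : ℝ => 1 / Real.sqrt (t ^ 2 + s) :=
    continuous_const.div hcA fun t => (hsqA t).ne'
  have hi1 : IntervalIntegrable _ MeasureTheory.volume (0:ℝ) π := hc1.intervalIntegrable 0 π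
  have hi2 : IntervalIntegrable _ MeasureTheory.volume (0:ℝ) π := hc2.intervalIntegrable 0 π
  have hig : IntervalIntegrable _ MeasureTheory.volume (0:ℝ) π := hcg.intervalIntegrable 0 π
  have higt : IntervalIntegrable _ MeasureTheory.volume (0:ℝ) π := (hcg.add continuous_id).intervalIntegrable 0 π
  -- split
  have hsplit : ringKernelF s
      = (∫ t in (0:ℝ)..π, (Real.cos t - 1) / Real.sqrt (2 * (1 - Real.cos t) + s))
        + ∫ t in (0:ℝ)..π, 1 / Real.sqrt (2 * (1 - Real.cos t) + s) := by
    rw [ringKernelF, ← intervalIntegral.integral_add hi1 hi2]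
    apply intervalIntegral.integral_congr
    intro t _
    simp only []
    rw [← add_div]
    ring_nf
  -- bound first integral
  have hE : |∫ t in (0:ℝ)..π, (Real.cos t - 1) / Real.sqrt (2 * (1 - Real.cos t) + s)| ≤ π := by
    have h := intervalIntegral.norm_integral_le_of_norm_le_const (a := (0:ℝ)) (b := π)
      (C := 1) (f := fun t => (Real.cos t - 1) / Real.sqrt (2 * (1 - Real.cos t) + s)) ?_
    · rw [Real.norm_eq_abs] at h
      simp only [sub_zero] at h
      calc |∫ t in (0:ℝ)..π, (Real.cos t - 1) / Real.sqrt (2 * (1 - Real.cos t) + s)|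
          ≤ 1 * |π| := h
        _ = π := by rw [abs_of_nonneg Real.pi_pos.le]; ring
    · intro t _
      have hct : Real.cos t ≤ 1 := Real.cos_le_one t
      have hle : 1 - Real.cos t ≤ Real.sqrt (2 * (1 - Real.cos t) + s) := by
        rw [Real.le_sqrt (by linarith) (hDpos t).le]
        nlinarith [Real.neg_one_le_cos t]
      rw [Real.norm_eq_abs, abs_div, abs_of_nonneg (Real.sqrt_nonneg _),
        abs_of_nonpos (by linarith : Real.cos t - 1 ≤ 0)]
      rw [div_le_one (hsqD t)]
      linarith
  -- FTC for the model integral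
  have hsq : 0 < Real.sqrt s := Real.sqrt_pos.2 hs0
  have hH : (∫ t in (0:ℝ)..π, 1 / Real.sqrt (t ^ 2 + s)) = Real.arsinh (π / Real.sqrt s) := by
    have hderiv : ∀ t ∈ Set.uIcc (0:ℝ) π,
        HasDerivAt (fun u => Real.arsinh (u / Real.sqrt s)) (1 / Real.sqrt (t ^ 2 + s)) t := by
      intro t _
      have h0 : HasDerivAt (fun u : ℝ => u / Real.sqrt s) (1 / Real.sqrt s) t :=
        (hasDerivAt_id t).div_const _
      have h := (Real.hasDerivAt_arsinh (t / Real.sqrt s)).comp t h0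
      refine h.congr_deriv (Eq.symm ?_)
      rw [div_pow, Real.sq_sqrt hs0.le]
      rw [show (1 + t ^ 2 / s) = (t ^ 2 + s) / s by field_simp; ring]
      rw [Real.sqrt_div (by positivity) s]
      rw [inv_div]
      field_simp
    rw [intervalIntegral.integral_eq_sub_of_hasDerivAt hderiv hig]
    simp [Real.arsinh_zero]
  -- comparison of integrals
  have hpi := Real.pi_lt_d2
  have hpi3 : 3 < π := by linarith [Real.pi_gt_three]
  have hlow : (∫ t in (0:ℝ)..π, 1 / Real.sqrt (t ^ 2 + s))
      ≤ ∫ t in (0:ℝ)..π, 1 / Real.sqrt (2 * (1 - Real.cos t) + s) := by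
    apply intervalIntegral.integral_mono_on Real.pi_pos.le hig hi2
    intro t ht
    apply one_div_le_one_div_of_le (hsqD t)
    apply Real.sqrt_le_sqrt
    nlinarith [Real.one_sub_sq_div_two_le_cos (x := t)]
  have hup : (∫ t in (0:ℝ)..π, 1 / Real.sqrt (2 * (1 - Real.cos t) + s))
      ≤ (∫ t in (0:ℝ)..π, 1 / Real.sqrt (t ^ 2 + s)) + π ^ 2 / 2 := by
    have h1 : (∫ t in (0:ℝ)..π, 1 / Real.sqrt (2 * (1 - Real.cos t) + s))
        ≤ ∫ t in (0:ℝ)..π, (1 / Real.sqrt (t ^ 2 + s) + id t) := by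
      apply intervalIntegral.integral_mono_on Real.pi_pos.le hi2 higt
      intro t ht
      obtain ⟨ht0, htpi⟩ := ht
      -- B := t^2 - t^4/12 + s  ≤ D t
      have hBle : t ^ 2 - t ^ 4 / 12 + s ≤ 2 * (1 - Real.cos t) + s := by
        nlinarith [aux_cos_upper ht0]
      have ht2 : t ^ 2 ≤ 10 := by nlinarith
      have ht4 : t ^ 4 ≤ 10 * t ^ 2 := by nlinarith [sq_nonneg t]
      have hBpos : 0 < t ^ 2 - t ^ 4 / 12 + s := by nlinarith
      have hb := Real.sqrt_pos.2 hBpos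
      have step1 : 1 / Real.sqrt (2 * (1 - Real.cos t) + s)
          ≤ 1 / Real.sqrt (t ^ 2 - t ^ 4 / 12 + s) :=
        one_div_le_one_div_of_le hb (Real.sqrt_le_sqrt hBle)
      have step2 : 1 / Real.sqrt (t ^ 2 - t ^ 4 / 12 + s) ≤ 1 / Real.sqrt (t ^ 2 + s) + t := by
        set a := Real.sqrt (t ^ 2 + s) with ha_def
        set b := Real.sqrt (t ^ 2 - t ^ 4 / 12 + s) with hb_def
        have ha2 : a ^ 2 = t ^ 2 + s := Real.sq_sqrt (hApos t).le
        have hb2 : b ^ 2 = t ^ 2 - t ^ 4 / 12 + s := Real.sq_sqrt hBpos.le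
        have hapos : 0 < a := hsqA t
        have hbpos : 0 < b := hb
        have hat : t ≤ a := by
          rw [ha_def, Real.le_sqrt ht0 (hApos t).le]
          linarith
        have hbt : t / 4 ≤ b := by
          rw [hb_def, Real.le_sqrt (by linarith) hBpos.le]
          nlinarith [ht4]
        have hd : (a - b) * (a + b) = t ^ 4 / 12 := by linear_combination ha2 - hb2
        have habl : t ^ 2 / 4 ≤ a * b := by
          calc t ^ 2 / 4 = t * (t / 4) := by ring
            _ ≤ a * b := mul_le_mul hat hbt (by linarith) hapos.le
        have hab2 : t ≤ a + b := by linarith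
        have h14 : t * (t ^ 2 / 4) * t ≤ t * (a * b) * (a + b) :=
          mul_le_mul (mul_le_mul_of_nonneg_left habl ht0) hab2 ht0
            (mul_nonneg ht0 (mul_pos hapos hbpos).le)
        have h1 : t ^ 4 / 4 ≤ t * (a * b) * (a + b) := by
          have : t * (t ^ 2 / 4) * t = t ^ 4 / 4 := by ring
          linarith [h14]
        have h2 : (a - b) * (a + b) ≤ t * (a * b) * (a + b) := by
          rw [hd]
          have h4 : (0:ℝ) ≤ t ^ 4 := by positivity
          linarith
        have key : a ≤ b + t * (a * b) := by
          have := le_of_mul_le_mul_right h2 (by linarith : (0:ℝ) < a + b)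
          linarith
        calc 1 / b = 1 / a + (a - b) / (a * b) := by
              field_simp
              ring
          _ ≤ 1 / a + t := by
              have : (a - b) / (a * b) ≤ t := by
                rw [div_le_iff₀ (mul_pos hapos hbpos)]
                linarith [key]
              linarith
      calc 1 / Real.sqrt (2 * (1 - Real.cos t) + s)
          ≤ 1 / Real.sqrt (t ^ 2 + s) + t := le_trans step1 step2
        _ = 1 / Real.sqrt (t ^ 2 + s) + id t := rfl
    have h2 : (∫ t in (0:ℝ)..π, (1 / Real.sqrt (t ^ 2 + s) + id t))
        = (∫ t in (0:ℝ)..π, 1 / Real.sqrt (t ^ 2 + s)) + π ^ 2 / 2 := by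
      rw [intervalIntegral.integral_add hig
        (continuous_id.intervalIntegrable 0 π)]
      congr 1
      simpa using intervalIntegral.integral_id (a := (0:ℝ)) (b := π)
    linarith [h1, h2.le]
  -- arsinh bounds
  have hsle1 : Real.sqrt s ≤ 1 := Real.sqrt_le_one.2 hs1
  set x := π / Real.sqrt s with hx_def
  have hxpos : 0 < x := by positivity
  have hxpi : π ≤ x := by
    rw [hx_def, le_div_iff₀ hsq]
    nlinarith [Real.pi_pos]
  have hx3 : 3 ≤ x := by linarith
  have harsinh : Real.arsinh x = Real.log (x + Real.sqrt (1 + x ^ 2)) := rfl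
  have hlow2 : Real.log (1 / Real.sqrt s) ≤ Real.arsinh x := by
    rw [harsinh]
    apply Real.log_le_log (by positivity)
    have h1 : 1 / Real.sqrt s ≤ π / Real.sqrt s := by
      gcongr
      linarith
    linarith [Real.sqrt_nonneg (1 + x ^ 2)]
  have hsqb : Real.sqrt (1 + x ^ 2) ≤ 2 * x := by
    rw [show (2 * x) = Real.sqrt ((2 * x) ^ 2) from (Real.sqrt_sq (by linarith)).symm]
    apply Real.sqrt_le_sqrt
    nlinarith
  have hup2 : Real.arsinh x ≤ Real.log 10 + Real.log (1 / Real.sqrt s) := by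
    rw [harsinh]
    have h3x : 3 * x ≤ 10 * (1 / Real.sqrt s) := by
      rw [hx_def]
      rw [mul_div_assoc', mul_one_div, div_le_div_iff₀ hsq hsq]
      nlinarith [hsq]
    have hle : x + Real.sqrt (1 + x ^ 2) ≤ 10 * (1 / Real.sqrt s) := by linarith
    calc Real.log (x + Real.sqrt (1 + x ^ 2)) ≤ Real.log (10 * (1 / Real.sqrt s)) :=
          Real.log_le_log (by positivity) hle
      _ = Real.log 10 + Real.log (1 / Real.sqrt s) :=
          Real.log_mul (by norm_num) (by positivity)
  have hlog10 : Real.log 10 ≤ 9 := by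
    linarith [Real.log_le_sub_one_of_pos (by norm_num : (0:ℝ) < 10)]
  -- assemble
  have hpisq : π ^ 2 ≤ 10 := by nlinarith [Real.pi_pos]
  rw [hH] at hlow hup
  have habs := abs_le.1 hE
  rw [hsplit]
  rw [abs_le]
  constructor
  · linarith
  · linarith
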